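/- If f : M → M' is a map between modules over Z[s^{±1}, t^{±1}] satisfying f(0) = 0, f(t·x + (1−st)·y) = t·f(x) + (1−st)·f(y) for all x, y, and f(s·x) = s·f(x) for all x, then f also satisfies f(t⁻¹·x + (1−s⁻¹t⁻¹)·y) = t⁻¹·f(x) + (1−s⁻¹t⁻¹)·f(y) for all x, y, and f(s⁻¹·x) = s⁻¹·f(x) for all x. -/

import Mathlib

noncomputable section

/-- The Laurent polynomial ring `ℤ[s^{±1}, t^{±1}]` in two variables,
realized as the group algebra of `ℤ × ℤ` over `ℤ`. -/
abbrev L : Type := AddMonoidAlgebra ℤ (ℤ × ℤ)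

/-- The variable `s`. -/
def sL : L := AddMonoidAlgebra.single (1, 0) 1
/-- The variable `t`. -/
def tL : L := AddMonoidAlgebra.single (0, 1) 1
/-- The inverse `s⁻¹`. -/
def sLi : L := AddMonoidAlgebra.single (-1, 0) 1
/-- The inverse `t⁻¹`. -/
def tLi : L := AddMonoidAlgebra.single (0, -1) 1

/-- `s` as a unit of `L`. -/
def sU : Lˣ where
  val := sL
  inv := sLi
  val_inv := by
    simp [sL, sLi, AddMonoidAlgebra.single_mul_single, AddMonoidAlgebra.one_def, Prod.ext_iff]
    rfl
  inv_val := by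
    simp [sL, sLi, AddMonoidAlgebra.single_mul_single, AddMonoidAlgebra.one_def, Prod.ext_iff]
    rfl

/-- The submodule `(1-st)M`. -/
def Dsub (M : Type) [AddCommGroup M] [Module L M] : Submodule L M :=
  LinearMap.range (LinearMap.lsmul L M (1 - sL * tL))

/-- The `s`-orbit `O_s(X)` of a subset `X ⊆ M`. -/
def Os {M : Type} [AddCommGroup M] [Module L M] (X : Set M) : Set M :=
  { y | ∃ (n : ℤ) (x : M), x ∈ X ∧ y = ((sU ^ n : Lˣ) : L) • x }

/-- `A` is a set of coset representatives for `M/(1-st)M`. -/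
def IsCR (M : Type) [AddCommGroup M] [Module L M] (A : Set M) : Prop :=
  ∀ x : M, ∃! a, a ∈ A ∧ x - a ∈ Dsub M

/-- `f` preserves the four Alexander biquandle operations. -/
def IsBqHom {M M' : Type} [AddCommGroup M] [Module L M] [AddCommGroup M'] [Module L M']
    (f : M → M') : Prop :=
  (∀ x y : M, f (tL • x + (1 - sL * tL) • y) = tL • f x + (1 - sL * tL) • f y) ∧
  (∀ x : M, f (sL • x) = sL • f x) ∧
  (∀ x y : M, f (tLi • x + (1 - sLi * tLi) • y) = tLi • f x + (1 - sLi * tLi) • f y) ∧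
  (∀ x : M, f (sLi • x) = sLi • f x)

/-- Preserving the unbarred Alexander biquandle operations together with `f 0 = 0`
implies preservation of the barred operations. -/
theorem stmt_0 {M M' : Type} [AddCommGroup M] [Module L M] [AddCommGroup M'] [Module L M']
    (f : M → M') (h0 : f 0 = 0)
    (h1 : ∀ x y : M, f (tL • x + (1 - sL * tL) • y) = tL • f x + (1 - sL * tL) • f y)
    (h2 : ∀ x : M, f (sL • x) = sL • f x) :
    (∀ x y : M, f (tLi • x + (1 - sLi * tLi) • y) = tLi • f x + (1 - sLi * tLi) • f y) ∧
    (∀ x : M, f (sLi • x) = sLi • f x) := by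
  have hs : sL * sLi = 1 := by
    simp [sL, sLi, AddMonoidAlgebra.single_mul_single, AddMonoidAlgebra.one_def, Prod.ext_iff]
    rfl
  have hs' : sLi * sL = 1 := by
    simp [sL, sLi, AddMonoidAlgebra.single_mul_single, AddMonoidAlgebra.one_def, Prod.ext_iff]
    rfl
  have ht : tL * tLi = 1 := by
    simp [tL, tLi, AddMonoidAlgebra.single_mul_single, AddMonoidAlgebra.one_def, Prod.ext_iff]
    rfl
  have ht' : tLi * tL = 1 := by
    simp [tL, tLi, AddMonoidAlgebra.single_mul_single, AddMonoidAlgebra.one_def, Prod.ext_iff]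
    rfl
  -- f commutes with sLi
  have hfsi : ∀ x : M, f (sLi • x) = sLi • f x := by
    intro x
    have := h2 (sLi • x)
    rw [smul_smul, hs, one_smul] at this
    calc f (sLi • x) = (sLi * sL) • f (sLi • x) := by rw [hs', one_smul]
      _ = sLi • (sL • f (sLi • x)) := by rw [smul_smul]
      _ = sLi • f x := by rw [← this]
  -- f commutes with tL
  have hft : ∀ x : M, f (tL • x) = tL • f x := by
    intro x
    have := h1 x 0
    simpa [h0] using this
  have hfti : ∀ x : M, f (tLi • x) = tLi • f x := by
    intro x
    have := hft (tLi • x)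
    rw [smul_smul, ht, one_smul] at this
    calc f (tLi • x) = (tLi * tL) • f (tLi • x) := by rw [ht', one_smul]
      _ = tLi • (tL • f (tLi • x)) := by rw [smul_smul]
      _ = tLi • f x := by rw [← this]
  -- additivity with respect to (1 - st)•y
  have key : ∀ (m y : M), f (m + (1 - sL * tL) • y) = f m + (1 - sL * tL) • f y := by
    intro m y
    have := h1 (tLi • m) y
    rw [smul_smul, ht, one_smul, hfti, smul_smul, ht, one_smul] at this
    exact this
  have key2 : ∀ (m y : M), f (m - (1 - sL * tL) • y) = f m - (1 - sL * tL) • f y := by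
    intro m y
    have := key (m - (1 - sL * tL) • y) y
    rw [sub_add_cancel] at this
    rw [this]; abel
  have h11 : sLi * tLi * (sL * tL) = 1 := by rw [mul_mul_mul_comm, hs', ht', one_mul]
  have hcoef : (1 - sLi * tLi) = -((1 - sL * tL) * (sLi * tLi)) := by
    rw [mul_comm (1 - sL * tL), mul_sub, mul_one, h11]; ring
  constructor
  · intro x y
    have h1' : tLi • x + (1 - sLi * tLi) • y = tLi • x - (1 - sL * tL) • ((sLi * tLi) • y) := by
      rw [smul_smul, hcoef]; module
    rw [h1', key2, hfti]
    have : f ((sLi * tLi) • y) = (sLi * tLi) • f y := by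
      rw [← smul_smul, hfsi, hfti, smul_smul]
    rw [this, smul_smul, hcoef]
    module
  · exact hfsi
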